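/- For real s > 0, 0 ≤ q < 1 and 0 < ρ < 1 − q, the roots U⁻(s), U⁺(s) of P(s,·) satisfy the strict inequalities q < U⁻(s) < 1 < U⁺(s). -/
import Mathlib


/-- For real `s > 0`, `0 ≤ q < 1`, `0 < ρ < 1 − q`, the roots
`U±(s) = (s+1+ρ+q ± √Δ(s))/2` of `P(s,·)` satisfy `q < U⁻(s) < 1 < U⁺(s)`. -/
theorem stmt_1 (q ρ s : ℝ) (hq0 : 0 ≤ q) (hq1 : q < 1)
    (hρ0 : 0 < ρ) (hρ1 : ρ < 1 - q) (hs : 0 < s) :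
    q < (s+1+ρ+q - Real.sqrt (s^2 + 2*(1+ρ-q)*s + (1-ρ-q)^2))/2 ∧
    (s+1+ρ+q - Real.sqrt (s^2 + 2*(1+ρ-q)*s + (1-ρ-q)^2))/2 < 1 ∧
    1 < (s+1+ρ+q + Real.sqrt (s^2 + 2*(1+ρ-q)*s + (1-ρ-q)^2))/2 := by
  set D : ℝ := s^2 + 2*(1+ρ-q)*s + (1-ρ-q)^2 with hD
  set A : ℝ := s+1+ρ+q with hA
  have hDlt : D < (A - 2*q)^2 := by
    simp only [hD, hA]; nlinarith [mul_pos hρ0 (sub_pos.mpr hq1)]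
  have hDgt : (A - 2)^2 < D := by
    simp only [hD, hA]; nlinarith [mul_pos hs (sub_pos.mpr hq1)]
  have hAq : 0 < A - 2*q := by simp only [hA]; nlinarith
  have h1 : Real.sqrt D < A - 2*q := by
    rw [show (A - 2*q)^2 = (A-2*q)*(A-2*q) by ring] at hDlt
    exact (Real.sqrt_lt' hAq).mpr (by nlinarith)
  have h2 : A - 2 < Real.sqrt D ∧ 2 - A < Real.sqrt D := by
    have habs : |A - 2| < Real.sqrt D := by
      rw [← Real.sqrt_sq_eq_abs]
      exact Real.sqrt_lt_sqrt (sq_nonneg _) hDgt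
    exact ⟨lt_of_le_of_lt (le_abs_self _) habs,
      lt_of_le_of_lt (by rw [abs_sub_comm] at habs ⊢; exact le_abs_self _) habs⟩
  refine ⟨by linarith [h1], by linarith [h2.1], by linarith [h2.2]⟩
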